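/- Let G be a finite connected graph, q ≥ 1, and κ ∈ {1,q}^E with κ_f = κ_g = 1 for two distinct edges f, g. Writing κ^{±±} for the configurations where f and g are set to q or 1 respectively, one has det Δ_{κ^{++}} · det Δ_{κ^{--}} ≤ det Δ_{κ^{+-}} · det Δ_{κ^{-+}}. -/

import Mathlib

open scoped Classical

/-- The set of (edge sets of) spanning trees of a finite graph `G`. -/
noncomputable def spanningTrees {V : Type*} [Fintype V] [DecidableEq V]
    (G : SimpleGraph V) : Finset (Finset (Sym2 V)) :=
  Finset.univ.filter fun t =>
    ↑t ⊆ G.edgeSet ∧ (SimpleGraph.fromEdgeSet (↑t : Set (Sym2 V))).Connected ∧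
      t.card = Fintype.card V - 1

/-- The determinant of the weighted graph Laplacian on mean-zero functions, via
Kirchhoff's formula `det Δ_κ = |V| ⬝ ∑_{t ∈ ST(G)} ∏_{e ∈ t} κ_e`. -/
noncomputable def detLap {V : Type*} [Fintype V] [DecidableEq V]
    (G : SimpleGraph V) (κ : Sym2 V → ℝ) : ℝ :=
  (Fintype.card V : ℝ) * ∑ t ∈ spanningTrees G, ∏ e ∈ t, κ e

open Finset Matrix Function
set_option linter.unusedSectionVars false

namespace ST
variable {V : Type*} [Fintype V] [DecidableEq V]

noncomputable def chi (r a : V) : {v : V // v ≠ r} → ℤ := fun u => if (u : V) = a then 1 else 0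

noncomputable def ecol (r : V) (e : Sym2 V) : {v : V // v ≠ r} → ℤ :=
  fun u => (if (u : V) = e.out.1 then 1 else 0) - (if (u : V) = e.out.2 then 1 else 0)

lemma out_spec (e : Sym2 V) : s(e.out.1, e.out.2) = e := by
  exact Quot.out_eq e

lemma ecol_spec (r : V) {e : Sym2 V} {a b : V} (h : s(a, b) = e) :
    ecol r e = chi r a - chi r b ∨ ecol r e = chi r b - chi r a := by
  rw [← out_spec e, Sym2.eq_iff] at h
  rcases h with ⟨h1, h3⟩ | ⟨h1, h3⟩
  · left; funext u; simp [ecol, chi, h1, h3]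
  · right; funext u; simp [ecol, chi, h1, h3]

lemma chi_r (r : V) : chi r r = 0 := by
  funext u; simp [chi, u.2]

/-- along a walk in `fromEdgeSet S`, the difference of indicators lies in the span of columns -/
lemma chi_sub_mem_span (r : V) (S : Finset (Sym2 V)) {a b : V}
    (p : (SimpleGraph.fromEdgeSet (↑S : Set (Sym2 V))).Walk a b) :
    chi r a - chi r b ∈ Submodule.span ℤ (ecol r '' (↑S : Set (Sym2 V))) := by
  induction p with
  | nil => simp
  | @cons a c b h p ih =>
    have hmem : s(a, c) ∈ (↑S : Set (Sym2 V)) := ((SimpleGraph.fromEdgeSet_adj _).mp h).1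
    have hcol : ecol r s(a,c) ∈ Submodule.span ℤ (ecol r '' (↑S : Set (Sym2 V))) :=
      Submodule.subset_span ⟨s(a,c), hmem, rfl⟩
    have : chi r a - chi r b = (chi r a - chi r c) + (chi r c - chi r b) := by ring
    rw [this]
    refine Submodule.add_mem _ ?_ ih
    rcases ecol_spec r (rfl : s(a,c) = s(a,c)) with h1 | h1
    · rw [← h1]; exact hcol
    · have : chi r a - chi r c = -(ecol r s(a,c)) := by rw [h1]; ring
      rw [this]; exact Submodule.neg_mem _ hcol

/-- For a connected edge set, the incidence matrix (rooted at `r`) has determinant `±1`. -/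
lemma det_sq_eq_one (r : V) (S : Finset (Sym2 V))
    (hconn : (SimpleGraph.fromEdgeSet (↑S : Set (Sym2 V))).Connected)
    (σ : {v : V // v ≠ r} ≃ {e : Sym2 V // e ∈ S}) :
    (Matrix.det (Matrix.of (fun u w : {v : V // v ≠ r} => ecol r (σ w) u)))^2 = 1 := by
  set B : Matrix {v : V // v ≠ r} {v : V // v ≠ r} ℤ :=
    Matrix.of (fun u w => ecol r (σ w) u) with hB
  have hrange : Set.range Bᵀ = ecol r '' (↑S : Set (Sym2 V)) := by
    ext y
    constructor
    · rintro ⟨w, rfl⟩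
      exact ⟨σ w, (σ w).2, rfl⟩
    · rintro ⟨e, he, rfl⟩
      refine ⟨σ.symm ⟨e, he⟩, ?_⟩
      funext u
      simp [hB]
  have hsurj : Function.Surjective B.mulVecLin := by
    rw [← LinearMap.range_eq_top, Matrix.range_mulVecLin, show Set.range B.col = Set.range Bᵀ from rfl, hrange]
    rw [eq_top_iff]
    rintro x -
    have hx : ∀ u : {v : V // v ≠ r}, Pi.single u (1:ℤ) ∈
        Submodule.span ℤ (ecol r '' (↑S : Set (Sym2 V))) := by
      intro u
      have hw : (SimpleGraph.fromEdgeSet (↑S : Set (Sym2 V))).Reachable u.1 r :=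
        hconn.preconnected u.1 r
      have := chi_sub_mem_span r S hw.some
      rw [chi_r, sub_zero] at this
      convert this using 1
      funext w
      simp [chi, Pi.single_apply, Subtype.ext_iff, eq_comm]
    -- x is a ℤ-combination of the singles
    have : x = ∑ u : {v : V // v ≠ r}, x u • Pi.single u (1:ℤ) := by
      funext w
      simp [Pi.single_apply, eq_comm]
    rw [this]
    exact Submodule.sum_mem _ fun u _ => Submodule.smul_mem _ _ (hx u)
  have hinj : Function.Injective B.mulVecLin :=
    OrzechProperty.injective_of_surjective_endomorphism B.mulVecLin hsurj
  have hunit : IsUnit B.det := by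
    have hbij : Function.Bijective B.mulVecLin := ⟨hinj, hsurj⟩
    have hEq : Matrix.toLin' B = B.mulVecLin := by
      apply LinearMap.ext
      intro v
      simp [Matrix.toLin'_apply, Matrix.mulVecLin_apply]
    have h1 : IsUnit (LinearMap.det B.mulVecLin) :=
      LinearEquiv.isUnit_det' (LinearEquiv.ofBijective B.mulVecLin hbij)
    rwa [← hEq, LinearMap.det_toLin'] at h1
  rcases Int.isUnit_iff.mp hunit with h | h <;> rw [h] <;> norm_num

noncomputable def colR (r : V) (e : Sym2 V) : {v : V // v ≠ r} → ℝ := fun u => ((ecol r e u : ℤ) : ℝ)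

lemma sum_ind (r : V) (h : V → ℝ) (a : V) :
    ∑ u : {v : V // v ≠ r}, h u.1 * (if (u : V) = a then 1 else 0)
      = if a = r then 0 else h a := by
  by_cases ha : a = r
  · simp only [ha, if_pos rfl]
    apply Finset.sum_eq_zero
    intro u _
    simp [u.2, ha, show (u:V) ≠ r from u.2]
  · rw [if_neg ha]
    rw [Fintype.sum_eq_single (⟨a, ha⟩ : {v : V // v ≠ r})]
    · simp
    · intro u hu
      have : (u : V) ≠ a := fun hc => hu (Subtype.ext hc)
      simp [this]

/-- If the edge set is non-diagonal but does not connect `V`, the incidence matrix is singular. -/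
lemma det_eq_zero_of_not_connected (r : V) (S : Finset (Sym2 V))
    (hd : ∀ e ∈ S, ¬ e.IsDiag)
    (hnc : ¬ (SimpleGraph.fromEdgeSet (↑S : Set (Sym2 V))).Connected)
    (σ : {v : V // v ≠ r} ≃ {e : Sym2 V // e ∈ S}) :
    Matrix.det (Matrix.of (fun u w : {v : V // v ≠ r} => colR r (σ w) u)) = 0 := by
  set H := SimpleGraph.fromEdgeSet (↑S : Set (Sym2 V)) with hH
  -- find a vertex not reachable from r
  have hnp : ¬ H.Preconnected := by
    intro hp
    exact hnc { preconnected := hp, nonempty := ⟨r⟩ }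
  rw [SimpleGraph.Preconnected] at hnp
  push_neg at hnp
  obtain ⟨a, b, hab⟩ := hnp
  have hu0 : ∃ u0, ¬ H.Reachable r u0 := by
    by_contra hc
    push_neg at hc
    exact hab ((hc a).symm.trans (hc b))
  obtain ⟨u0, hu0⟩ := hu0
  have hu0r : u0 ≠ r := by
    intro hc
    subst hc
    exact hu0 (SimpleGraph.Reachable.refl u0)
  have hrC : ¬ H.Reachable u0 r := fun hc => hu0 hc.symm
  rw [← Matrix.exists_vecMul_eq_zero_iff]
  refine ⟨fun u => if H.Reachable u0 u.1 then 1 else 0, ?_, ?_⟩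
  · intro hc
    have := congrFun hc ⟨u0, hu0r⟩
    simp at this
  · funext w
    simp only [Matrix.vecMul, dotProduct, Matrix.of_apply, Pi.zero_apply]
    set e : Sym2 V := ((σ w : {e : Sym2 V // e ∈ S}) : Sym2 V) with he
    have hwS : e ∈ S := (σ w).2
    have hne : e.out.1 ≠ e.out.2 := by
      have h1 := hd e hwS
      rw [← out_spec e, Sym2.mk_isDiag_iff] at h1
      exact h1
    have hadj : H.Adj e.out.1 e.out.2 := by
      rw [hH]
      refine (SimpleGraph.fromEdgeSet_adj _).mpr ⟨?_, hne⟩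
      rw [out_spec e]
      exact hwS
    have hiff : H.Reachable u0 e.out.1 ↔ H.Reachable u0 e.out.2 :=
      ⟨fun h => h.trans hadj.reachable, fun h => h.trans hadj.symm.reachable⟩
    have hcol : ∀ u : {v : V // v ≠ r}, colR r e u =
        (if (u:V) = e.out.1 then (1:ℝ) else 0) - (if (u:V) = e.out.2 then 1 else 0) := by
      intro u
      simp [colR, ecol, apply_ite (fun z : ℤ => (z : ℝ))]
    have hsplit : ∑ u : {v : V // v ≠ r},
        (if H.Reachable u0 u.1 then (1:ℝ) else 0) * colR r e u =
        (∑ u : {v : V // v ≠ r}, (if H.Reachable u0 u.1 then (1:ℝ) else 0) *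
            (if (u:V) = e.out.1 then 1 else 0)) -
        (∑ u : {v : V // v ≠ r}, (if H.Reachable u0 u.1 then (1:ℝ) else 0) *
            (if (u:V) = e.out.2 then 1 else 0)) := by
      rw [← Finset.sum_sub_distrib]
      apply Finset.sum_congr rfl
      intro u _
      rw [hcol u]
      ring
    rw [hsplit, sum_ind r (fun x => if H.Reachable u0 x then (1:ℝ) else 0) e.out.1,
      sum_ind r (fun x => if H.Reachable u0 x then (1:ℝ) else 0) e.out.2]
    have key : ∀ x : V, (if x = r then (0:ℝ) else if H.Reachable u0 x then 1 else 0)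
        = if H.Reachable u0 x then 1 else 0 := by
      intro x
      by_cases hx : x = r
      · subst hx
        simp [hrC]
      · simp [hx]
    rw [key e.out.1, key e.out.2]
    by_cases h1 : H.Reachable u0 e.out.1
    · rw [if_pos h1, if_pos (hiff.mp h1)]
      ring
    · rw [if_neg h1, if_neg (fun h => h1 (hiff.mpr h))]
      ring

lemma card_W (r : V) : Fintype.card {v : V // v ≠ r} = Fintype.card V - 1 := by
  have := Fintype.card_subtype_compl (fun v : V => v = r)
  simp only [Fintype.card_subtype_eq] at this
  convert this using 2

noncomputable def Pmat (r : V) (e : Sym2 V) : Matrix {v : V // v ≠ r} {v : V // v ≠ r} ℝ :=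
  Matrix.of fun u w => colR r e u * colR r e w


variable {V : Type*} [Fintype V] [DecidableEq V]

lemma spanningTrees_eq (G : SimpleGraph V) :
    spanningTrees G = (G.edgeFinset.powersetCard (Fintype.card V - 1)).filter
      (fun t : Finset (Sym2 V) => (SimpleGraph.fromEdgeSet (↑t : Set (Sym2 V))).Connected) := by
  ext t
  simp only [spanningTrees, Finset.mem_filter, Finset.mem_univ, true_and,
    Finset.mem_powersetCard]
  constructor
  · rintro ⟨h1, h2, h3⟩
    exact ⟨⟨fun e he => SimpleGraph.mem_edgeFinset.mpr (h1 he), h3⟩, h2⟩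
  · rintro ⟨⟨h1, h3⟩, h2⟩
    exact ⟨fun e he => SimpleGraph.mem_edgeFinset.mp (h1 he), h2, h3⟩

theorem det_Amat (G : SimpleGraph V) (r : V) (x : Sym2 V → ℝ) :
    (∑ e ∈ G.edgeFinset, x e • Pmat r e).det = ∑ t ∈ spanningTrees G, ∏ e ∈ t, x e := by
  classical
  set W := {v : V // v ≠ r}
  -- step A : expand determinant by multilinearity in the rows
  have hrow : (∑ e ∈ G.edgeFinset, x e • Pmat r e)
      = Matrix.of (fun u : W => ∑ e ∈ G.edgeFinset, (x e * colR r e u) • colR r e) := by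
    ext u w
    simp only [Matrix.sum_apply, Matrix.smul_apply, Pmat, Matrix.of_apply, smul_eq_mul,
      Finset.sum_apply, Pi.smul_apply]
    exact Finset.sum_congr rfl fun e _ => by ring
  have stepA : (∑ e ∈ G.edgeFinset, x e • Pmat r e).det
      = ∑ c ∈ Fintype.piFinset (fun _ : W => G.edgeFinset),
          (∏ u : W, (x (c u) * colR r (c u) u)) *
            (Matrix.of fun u w : W => colR r (c u) w).det := by
    rw [hrow]
    show (Matrix.detRowAlternating (Matrix.of fun u : W =>
      ∑ e ∈ G.edgeFinset, (x e * colR r e u) • colR r e) : ℝ) = _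
    rw [show (Matrix.of fun u : W => ∑ e ∈ G.edgeFinset, (x e * colR r e u) • colR r e)
      = fun u : W => ∑ e ∈ G.edgeFinset, (x e * colR r e u) • colR r e from rfl]
    rw [← AlternatingMap.coe_multilinearMap]
    rw [(Matrix.detRowAlternating.toMultilinearMap).map_sum_finset
      (fun (u : W) (e : Sym2 V) => (x e * colR r e u) • colR r e) (fun _ => G.edgeFinset)]
    apply Finset.sum_congr rfl
    intro c _
    rw [show (fun u : W => (x (c u) * colR r (c u) u) • colR r (c u))
      = fun u : W => (x (c u) * colR r (c u) u) • (fun u' : W => colR r (c u') ) u from rfl]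
    rw [MultilinearMap.map_smul_univ]
    rfl
  rw [stepA]
  -- step B : only injective `c` contribute
  rw [← Finset.sum_filter_of_ne (p := fun c : W → Sym2 V => Function.Injective c) ?_]
  swap
  · intro c _ hne
    by_contra hni
    apply hne
    rw [Function.not_injective_iff] at hni
    obtain ⟨u, u', hcc, huu⟩ := hni
    have : (Matrix.of fun u w : W => colR r (c u) w).det = 0 := by
      apply Matrix.det_zero_of_row_eq huu
      funext w
      simp [hcc]
    rw [this, mul_zero]
  -- step C : group by the image
  rw [← Finset.sum_fiberwise_of_maps_to (g := fun c : W → Sym2 V => Finset.image c Finset.univ)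
    (t := G.edgeFinset.powersetCard (Fintype.card W)) ?_]
  swap
  · intro c hc
    rw [Finset.mem_filter] at hc
    obtain ⟨hc1, hc2⟩ := hc
    rw [Fintype.mem_piFinset] at hc1
    rw [Finset.mem_powersetCard]
    constructor
    · intro e he
      obtain ⟨u, -, rfl⟩ := Finset.mem_image.mp he
      exact hc1 u
    · rw [Finset.card_image_of_injective _ hc2, Finset.card_univ]
  have inner : ∀ S ∈ G.edgeFinset.powersetCard (Fintype.card W),
      (∑ c ∈ (Fintype.piFinset (fun _ : W => G.edgeFinset)).filter
          (fun c : W → Sym2 V => Function.Injective c) |>.filter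
          (fun c : W → Sym2 V => Finset.image c Finset.univ = S),
        (∏ u : W, (x (c u) * colR r (c u) u)) *
          (Matrix.of fun u w : W => colR r (c u) w).det)
      = if (SimpleGraph.fromEdgeSet (↑S : Set (Sym2 V))).Connected
          then ∏ e ∈ S, x e else 0 := by
    intro S hS
    rw [Finset.mem_powersetCard] at hS
    obtain ⟨hSsub, hScard⟩ := hS
    have hcards : Fintype.card W = Fintype.card {e : Sym2 V // e ∈ S} := by
      rw [Fintype.card_coe, hScard]
    set σ0 : W ≃ {e : Sym2 V // e ∈ S} := Fintype.equivOfCardEq hcards with hσ0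
    set B : Matrix W W ℝ := Matrix.of (fun u w : W => colR r ((σ0 w : Sym2 V)) u) with hBdef
    have hperm : (∑ c ∈ (Fintype.piFinset (fun _ : W => G.edgeFinset)).filter
          (fun c : W → Sym2 V => Function.Injective c) |>.filter
          (fun c : W → Sym2 V => Finset.image c Finset.univ = S),
        (∏ u : W, (x (c u) * colR r (c u) u)) *
          (Matrix.of fun u w : W => colR r (c u) w).det)
        = ∑ π : Equiv.Perm W,
            (∏ u : W, (x ((σ0 (π u) : Sym2 V)) * colR r ((σ0 (π u) : Sym2 V)) u)) *
              (Matrix.of fun u w : W => colR r ((σ0 (π u) : Sym2 V)) w).det := by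
      refine (Finset.sum_nbij (i := fun (π : Equiv.Perm W) (u : W) => ((σ0 (π u) : Sym2 V)))
        ?_ ?_ ?_ ?_).symm
      · intro π _
        simp only [Finset.mem_filter]
        refine ⟨⟨?_, ?_⟩, ?_⟩
        · rw [Fintype.mem_piFinset]
          intro u
          exact hSsub (σ0 (π u)).2
        · intro u u' huu
          exact π.injective (σ0.injective (Subtype.ext huu))
        · ext e
          simp only [Finset.mem_image, Finset.mem_univ, true_and]
          constructor
          · rintro ⟨u, rfl⟩
            exact (σ0 (π u)).2
          · intro he
            exact ⟨π.symm (σ0.symm ⟨e, he⟩), by simp⟩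
      · intro π _ π' _ hpp
        ext u
        exact congrArg Subtype.val (σ0.injective (Subtype.ext (congrFun hpp u)))
      · rintro c hc
        simp only [Finset.mem_coe, Finset.mem_filter] at hc
        obtain ⟨⟨-, hinj⟩, himg⟩ := hc
        have hcS : ∀ u : W, c u ∈ S := by
          intro u
          rw [← himg]
          exact Finset.mem_image.mpr ⟨u, Finset.mem_univ u, rfl⟩
        have hψinj : Function.Injective (fun u : W => σ0.symm ⟨c u, hcS u⟩) := by
          intro u u' h
          apply hinj
          exact congrArg Subtype.val (σ0.symm.injective h)
        set π : Equiv.Perm W := Equiv.ofBijective _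
          ((Finite.injective_iff_bijective).mp hψinj) with hπ
        refine ⟨π, Finset.mem_coe.mpr (Finset.mem_univ π), ?_⟩
        funext u
        show ((σ0 (π u) : Sym2 V)) = c u
        have : π u = σ0.symm ⟨c u, hcS u⟩ := rfl
        rw [this, Equiv.apply_symm_apply]
      · intro π _
        rfl
    rw [hperm]
    have hterm : ∀ π : Equiv.Perm W,
        (∏ u : W, (x ((σ0 (π u) : Sym2 V)) * colR r ((σ0 (π u) : Sym2 V)) u)) *
          (Matrix.of fun u w : W => colR r ((σ0 (π u) : Sym2 V)) w).det
        = (∏ e ∈ S, x e) * Bᵀ.det *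
            (((Equiv.Perm.sign π : ℤ) : ℝ) * ∏ u : W, Bᵀ (π u) u) := by
      intro π
      have h1 : (∏ u : W, (x ((σ0 (π u) : Sym2 V)) * colR r ((σ0 (π u) : Sym2 V)) u))
          = (∏ u : W, x ((σ0 (π u) : Sym2 V))) * ∏ u : W, Bᵀ (π u) u := by
        rw [← Finset.prod_mul_distrib]
        rfl
      have h2 : (∏ u : W, x ((σ0 (π u) : Sym2 V))) = ∏ e ∈ S, x e := by
        rw [show (fun u : W => x ((σ0 (π u) : Sym2 V))) =
          fun u : W => (fun es : {e : Sym2 V // e ∈ S} => x es) ((π.trans σ0) u) from rfl]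
        rw [Equiv.prod_comp (π.trans σ0) (fun es : {e : Sym2 V // e ∈ S} => x (es : Sym2 V))]
        exact Finset.prod_coe_sort S x
      have h3 : (Matrix.of fun u w : W => colR r ((σ0 (π u) : Sym2 V)) w)
          = (Bᵀ).submatrix π id := rfl
      rw [h1, h2, h3, Matrix.det_permute]
      push_cast
      ring
    rw [Finset.sum_congr rfl (fun π _ => hterm π), ← Finset.mul_sum, ← Matrix.det_apply']
    rw [Matrix.det_transpose]
    set Bz : Matrix W W ℤ := Matrix.of (fun u w : W => ecol r ((σ0 w : Sym2 V)) u) with hBz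
    have hmap : B = Bz.map (Int.castRingHom ℝ) := rfl
    have hdet : B.det = ((Bz.det : ℤ) : ℝ) := by
      rw [hmap, ← RingHom.mapMatrix_apply, ← RingHom.map_det]
      rfl
    by_cases hconn : (SimpleGraph.fromEdgeSet (↑S : Set (Sym2 V))).Connected
    · rw [if_pos hconn]
      have h1 := det_sq_eq_one r S hconn σ0
      have h2 : B.det * B.det = 1 := by
        rw [hdet, ← Int.cast_mul, ← sq, h1]
        norm_num
      rw [mul_assoc, h2, mul_one]
    · rw [if_neg hconn]
      have hd : ∀ e ∈ S, ¬ e.IsDiag := fun e he =>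
        G.not_isDiag_of_mem_edgeSet (SimpleGraph.mem_edgeFinset.mp (hSsub he))
      rw [det_eq_zero_of_not_connected r S hd hconn σ0]
      ring
  rw [Finset.sum_congr rfl inner, ← Finset.sum_filter, spanningTrees_eq G, card_W r]

end ST

/-- for a finite connected graph, `q ≥ 1`, `κ ∈ {1,q}^E` with
`κ_f = κ_g = 1` for distinct edges `f, g`, one has
`det Δ_{κ⁺⁺} ⬝ det Δ_{κ⁻⁻} ≤ det Δ_{κ⁺⁻} ⬝ det Δ_{κ⁻+}`. -/
theorem detLap_lattice_two_edges {V : Type*} [Fintype V] [DecidableEq V]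
    (G : SimpleGraph V) (hG : G.Connected)
    (q : ℝ) (hq : 1 ≤ q) (κ : Sym2 V → ℝ) (hκ : ∀ e, κ e = 1 ∨ κ e = q)
    (f g : Sym2 V) (hf : f ∈ G.edgeSet) (hg : g ∈ G.edgeSet) (hfg : f ≠ g)
    (hκf : κ f = 1) (hκg : κ g = 1) :
    detLap G (Function.update (Function.update κ f q) g q) * detLap G κ ≤
      detLap G (Function.update κ f q) * detLap G (Function.update κ g q) := by
  classical
  open ST Finset in
  obtain ⟨r⟩ : Nonempty V := hG.nonempty
  set W := {v : V // v ≠ r}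
  set η : ℝ → ℝ → Sym2 V → ℝ :=
    fun a b => Function.update (Function.update κ f a) g b with hη
  have hκ0 : ∀ e, 0 ≤ κ e := fun e => by rcases hκ e with h | h <;> rw [h] <;> linarith
  set T := spanningTrees G with hT
  set P : Finset (Sym2 V) → ℝ := fun t => ∏ e ∈ t, κ e with hP
  set S11 := ∑ t ∈ T.filter (fun t => f ∈ t ∧ g ∈ t), P t with hS11
  set S10 := ∑ t ∈ T.filter (fun t => f ∈ t ∧ ¬ g ∈ t), P t with hS10
  set S01 := ∑ t ∈ T.filter (fun t => ¬ f ∈ t ∧ g ∈ t), P t with hS01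
  set S00 := ∑ t ∈ T.filter (fun t => ¬ f ∈ t ∧ ¬ g ∈ t), P t with hS00
  have hsplit : ∀ a b : ℝ, ∑ t ∈ T, ∏ e ∈ t, (η a b) e
      = S00 + a * S10 + b * S01 + a * b * S11 := by
    intro a b
    have hprod : ∀ t ∈ T, ∏ e ∈ t, (η a b) e
        = (if f ∈ t then a else 1) * ((if g ∈ t then b else 1) * P t) := by
      intro t ht
      have hpt : ∀ e ∈ t, (η a b) e
          = (if e = f then a else 1) * ((if e = g then b else 1) * κ e) := by
        intro e he
        have hgf : g ≠ f := fun hc => hfg hc.symm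
        by_cases h1 : e = g
        · rw [h1, show (η a b) g = b from by simp [hη], if_neg hgf, if_pos rfl, hκg]
          ring
        · by_cases h2 : e = f
          · rw [h2, show (η a b) f = a from by
              simp [hη, Function.update_of_ne hfg], if_pos rfl, if_neg hfg, hκf]
            ring
          · rw [show (η a b) e = κ e from by
              simp [hη, Function.update_of_ne h1, Function.update_of_ne h2],
              if_neg h2, if_neg h1]
            ring
      rw [Finset.prod_congr rfl hpt, Finset.prod_mul_distrib, Finset.prod_mul_distrib,
        Finset.prod_ite_eq' t f (fun _ => a), Finset.prod_ite_eq' t g (fun _ => b)]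
    rw [Finset.sum_congr rfl hprod]
    rw [← Finset.sum_filter_add_sum_filter_not T (fun t => f ∈ t)]
    rw [← Finset.sum_filter_add_sum_filter_not (T.filter (fun t => f ∈ t)) (fun t => g ∈ t)]
    rw [← Finset.sum_filter_add_sum_filter_not (T.filter (fun t => ¬ f ∈ t)) (fun t => g ∈ t)]
    rw [Finset.filter_filter, Finset.filter_filter, Finset.filter_filter, Finset.filter_filter]
    have e11 : ∑ t ∈ T.filter (fun t => f ∈ t ∧ g ∈ t),
        (if f ∈ t then a else 1) * ((if g ∈ t then b else 1) * P t) = a * b * S11 := by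
      rw [hS11, Finset.mul_sum]
      refine Finset.sum_congr rfl fun t ht => ?_
      rw [Finset.mem_filter] at ht
      rw [if_pos ht.2.1, if_pos ht.2.2]; ring
    have e10 : ∑ t ∈ T.filter (fun t => f ∈ t ∧ ¬ g ∈ t),
        (if f ∈ t then a else 1) * ((if g ∈ t then b else 1) * P t) = a * S10 := by
      rw [hS10, Finset.mul_sum]
      refine Finset.sum_congr rfl fun t ht => ?_
      rw [Finset.mem_filter] at ht
      rw [if_pos ht.2.1, if_neg ht.2.2]; ring
    have e01 : ∑ t ∈ T.filter (fun t => ¬ f ∈ t ∧ g ∈ t),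
        (if f ∈ t then a else 1) * ((if g ∈ t then b else 1) * P t) = b * S01 := by
      rw [hS01, Finset.mul_sum]
      refine Finset.sum_congr rfl fun t ht => ?_
      rw [Finset.mem_filter] at ht
      rw [if_neg ht.2.1, if_pos ht.2.2]; ring
    have e00 : ∑ t ∈ T.filter (fun t => ¬ f ∈ t ∧ ¬ g ∈ t),
        (if f ∈ t then a else 1) * ((if g ∈ t then b else 1) * P t) = S00 := by
      rw [hS00]
      refine Finset.sum_congr rfl fun t ht => ?_
      rw [Finset.mem_filter] at ht
      rw [if_neg ht.2.1, if_neg ht.2.2]; ring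
    rw [e11, e10, e01, e00]; ring
  have hψ : ∀ a b : ℝ, (∑ e ∈ G.edgeFinset, (η a b) e • ST.Pmat r e).det
      = S00 + a * S10 + b * S01 + a * b * S11 :=
    fun a b => (ST.det_Amat G r (η a b)).trans (hsplit a b)
  have hA : ∀ a b : ℝ, (∑ e ∈ G.edgeFinset, (η a b) e • ST.Pmat r e)
      = (∑ e ∈ G.edgeFinset, (η 0 0) e • ST.Pmat r e)
        + a • ST.Pmat r f + b • ST.Pmat r g := by
    intro a b
    have h1 : ∀ e ∈ G.edgeFinset, (η a b) e • ST.Pmat r e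
        = (η 0 0) e • ST.Pmat r e + (if e = f then a • ST.Pmat r e else 0)
            + (if e = g then b • ST.Pmat r e else 0) := by
      intro e he
      have hgf : g ≠ f := fun hc => hfg hc.symm
      have hsc : (η a b) e = (η 0 0) e + (if e = f then a else 0) + (if e = g then b else 0) := by
        by_cases h1 : e = g
        · rw [h1, show (η a b) g = b from by simp [hη], show (η 0 0) g = 0 from by simp [hη],
            if_neg hgf, if_pos rfl]
          ring
        · by_cases h2 : e = f
          · rw [h2, show (η a b) f = a from by simp [hη, Function.update_of_ne hfg],
              show (η 0 0) f = 0 from by simp [hη, Function.update_of_ne hfg],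
              if_pos rfl, if_neg hfg]
            ring
          · rw [show (η a b) e = κ e from by
              simp [hη, Function.update_of_ne h1, Function.update_of_ne h2],
              show (η 0 0) e = κ e from by
              simp [hη, Function.update_of_ne h1, Function.update_of_ne h2],
              if_neg h2, if_neg h1]
            ring
      rw [hsc, add_smul, add_smul]
      congr 1
      · congr 1
        split <;> simp
      · split <;> simp
    rw [Finset.sum_congr rfl h1, Finset.sum_add_distrib, Finset.sum_add_distrib,
      Finset.sum_ite_eq' G.edgeFinset f (fun e => a • ST.Pmat r e),
      Finset.sum_ite_eq' G.edgeFinset g (fun e => b • ST.Pmat r e),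
      if_pos (SimpleGraph.mem_edgeFinset.mpr hf), if_pos (SimpleGraph.mem_edgeFinset.mpr hg)]
  have hkey : S00 * S11 ≤ S10 * S01 := by
    have hS10nn : 0 ≤ S10 :=
      Finset.sum_nonneg fun t _ => Finset.prod_nonneg fun e _ => hκ0 e
    have hS01nn : 0 ≤ S01 :=
      Finset.sum_nonneg fun t _ => Finset.prod_nonneg fun e _ => hκ0 e
    set A0 := ∑ e ∈ G.edgeFinset, (η 0 0) e • ST.Pmat r e with hA0
    by_cases h0 : A0.det = 0
    · have h00 : S00 = 0 := by
        have := hψ 0 0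
        rw [h0] at this
        linarith
      rw [h00, zero_mul]
      exact mul_nonneg hS10nn hS01nn
    · set iA := A0⁻¹ with hiA
      set vf : W → ℝ := ST.colR r f with hvf
      set vg : W → ℝ := ST.colR r g with hvg
      set al := dotProduct vf (iA.mulVec vf) with hal
      set be := dotProduct vg (iA.mulVec vg) with hbe
      set ga := dotProduct vf (iA.mulVec vg) with hga
      set de := dotProduct vg (iA.mulVec vf) with hde0
      have hU : IsUnit A0.det := isUnit_iff_ne_zero.mpr h0
      have hA0sym : A0ᵀ = A0 := by
        rw [hA0]
        ext u w
        simp only [Matrix.transpose_apply, Matrix.sum_apply, Matrix.smul_apply, ST.Pmat,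
          Matrix.of_apply, smul_eq_mul]
        exact Finset.sum_congr rfl fun e _ => by ring
      have hiAsym : iAᵀ = iA := by
        rw [hiA, Matrix.transpose_nonsing_inv, hA0sym]
      have hiAentry : ∀ u w, iA u w = iA w u := by
        intro u w
        conv_lhs => rw [← hiAsym]
        rfl
      have hde : de = ga := by
        rw [hde0, hga]
        simp only [dotProduct, Matrix.mulVec, Finset.mul_sum]
        rw [Finset.sum_comm]
        refine Finset.sum_congr rfl fun w _ => Finset.sum_congr rfl fun u _ => ?_
        rw [hiAentry u w]
        ring
      have hgen : ∀ (y z : W → ℝ) (s : ℝ),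
          (∑ w : W, y w * ∑ u : W, iA w u * (s * z u))
            = s * dotProduct y (iA.mulVec z) := by
        intro y z s
        simp only [dotProduct, Matrix.mulVec, Finset.mul_sum]
        refine Finset.sum_congr rfl fun w _ => Finset.sum_congr rfl fun u _ => by ring
      have hform : ∀ a b : ℝ, (A0 + a • ST.Pmat r f + b • ST.Pmat r g).det
          = A0.det * ((1 + a * al) * (1 + b * be) - (a * de) * (b * ga)) := by
        intro a b
        set N : Matrix W (Fin 2) ℝ :=
          Matrix.of (fun u (i : Fin 2) => if i = 0 then a * vf u else b * vg u) with hN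
        set M : Matrix (Fin 2) W ℝ :=
          Matrix.of (fun (i : Fin 2) w => if i = 0 then vf w else vg w) with hM
        have hNM : a • ST.Pmat r f + b • ST.Pmat r g = N * M := by
          ext u w
          simp only [Matrix.add_apply, Matrix.smul_apply, ST.Pmat, Matrix.of_apply,
            smul_eq_mul, Matrix.mul_apply, Fin.sum_univ_two, hN, hM]
          norm_num [hvf, hvg]
          ring
        have h2 : A0 + a • ST.Pmat r f + b • ST.Pmat r g = A0 * (1 + iA * N * M) := by
          rw [add_assoc, hNM, Matrix.mul_add, Matrix.mul_one, hiA, ← Matrix.mul_assoc,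
            ← Matrix.mul_assoc, Matrix.mul_nonsing_inv A0 hU, Matrix.one_mul]
        rw [h2, Matrix.det_mul]
        congr 1
        rw [Matrix.det_one_add_mul_comm (iA * N) M, Matrix.det_fin_two]
        have hent : ∀ (i j : Fin 2), (M * (iA * N)) i j
            = ∑ w : W, (if i = 0 then vf w else vg w) *
                ∑ u : W, iA w u * (if j = 0 then a * vf u else b * vg u) := by
          intro i j
          rw [Matrix.mul_apply]
          refine Finset.sum_congr rfl fun w _ => ?_
          rw [Matrix.mul_apply]
          simp [hM, hN]; split_ifs <;> rfl
        have h00 : (M * (iA * N)) 0 0 = a * al := by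
          rw [hent]
          simp only [if_pos rfl]
          exact hgen vf vf a
        have h01 : (M * (iA * N)) 0 1 = b * ga := by
          rw [hent]
          norm_num
          exact hgen vf vg b
        have h10 : (M * (iA * N)) 1 0 = a * de := by
          rw [hent]
          norm_num
          exact hgen vg vf a
        have h11 : (M * (iA * N)) 1 1 = b * be := by
          rw [hent]
          norm_num
          exact hgen vg vg b
        simp only [Matrix.add_apply, Matrix.one_apply, h00, h01, h10, h11]
        norm_num
        ring
      have heq : ∀ a b : ℝ, S00 + a * S10 + b * S01 + a * b * S11
          = A0.det * ((1 + a * al) * (1 + b * be) - (a * de) * (b * ga)) := by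
        intro a b
        rw [← hψ a b, hA a b, hform a b]
      have h1 : S00 = A0.det := by linear_combination (heq 0 0)
      have h2 : S10 = A0.det * al := by linear_combination (heq 1 0) - (heq 0 0)
      have h3 : S01 = A0.det * be := by linear_combination (heq 0 1) - (heq 0 0)
      have h4 : S11 = A0.det * (al * be - de * ga) := by
        linear_combination (heq 1 1) - (heq 1 0) - (heq 0 1) + (heq 0 0)
      have hfin : S00 * S11 = S10 * S01 - (A0.det * ga)^2 := by
        rw [h1, h2, h3, h4, hde]
        ring
      rw [hfin]
      have := sq_nonneg (A0.det * ga)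
      linarith
  -- final assembly
  have hupf : Function.update κ f (1:ℝ) = κ := by
    rw [← hκf]; exact Function.update_eq_self f κ
  have hupg : Function.update κ g (1:ℝ) = κ := by
    rw [← hκg]; exact Function.update_eq_self g κ
  have hη11 : η 1 1 = κ := by
    rw [hη]; simp only [hupf, hupg]
  have hηq1 : η q 1 = Function.update κ f q := by
    rw [hη]
    have : (Function.update κ f q) g = κ g := Function.update_of_ne (fun hc => hfg hc.symm) _ _
    rw [show (1:ℝ) = (Function.update κ f q) g by rw [this, hκg]]
    exact Function.update_eq_self g _
  have hη1q : η 1 q = Function.update κ g q := by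
    rw [hη]; simp only [hupf]
  have hηqq : Function.update (Function.update κ f q) g q = η q q := rfl
  have hdetLap : ∀ a b : ℝ, detLap G (η a b)
      = (Fintype.card V : ℝ) * (S00 + a * S10 + b * S01 + a * b * S11) := by
    intro a b
    rw [detLap, ← hT, hsplit]
  rw [hηqq, ← hηq1, ← hη1q, ← hη11, hdetLap, hdetLap, hdetLap, hdetLap]
  have expand : (Fintype.card V : ℝ) * (S00 + q * S10 + 1 * S01 + q * 1 * S11)
        * ((Fintype.card V : ℝ) * (S00 + 1 * S10 + q * S01 + 1 * q * S11))
      - (Fintype.card V : ℝ) * (S00 + q * S10 + q * S01 + q * q * S11)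
        * ((Fintype.card V : ℝ) * (S00 + 1 * S10 + 1 * S01 + 1 * 1 * S11))
      = ((Fintype.card V : ℝ)^2 * (q-1)^2) * (S10 * S01 - S00 * S11) := by
    ring
  have h9 : 0 ≤ ((Fintype.card V : ℝ)^2 * (q-1)^2) * (S10 * S01 - S00 * S11) := by
    refine mul_nonneg (by positivity) (by linarith)
  linarith [expand, h9]
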